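/- Let M and H be real symmetric n×n matrices with n ≥ 2, and let v_1 be a unit-norm eigenvector of M corresponding to its largest eigenvalue λ_1(M). If λ_1(M) − λ_2(M) ≥ 2‖H‖_op, then λ_1(M+H) ≤ λ_1(M) + v_1ᵀ H v_1 + 2‖H v_1‖_2² / (λ_1(M) − λ_2(M)). -/

import Mathlib

open Matrix

/-- The eigenvalues of a real symmetric matrix, listed in decreasing order
(`eigDesc hM i` is the `(i+1)`-th largest eigenvalue, counted with multiplicity). -/
noncomputable def eigDesc {n : ℕ} {M : Matrix (Fin n) (Fin n) ℝ} (hM : M.IsHermitian) :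
    Fin n → ℝ :=
  fun i => -(((fun j => -hM.eigenvalues j) ∘ Tuple.sort (fun j => -hM.eigenvalues j)) i)

/-- The ℓ²→ℓ² operator norm (largest singular value) of a real matrix. -/
noncomputable def opNorm {m n : ℕ} (M : Matrix (Fin m) (Fin n) ℝ) : ℝ :=
  ‖(Matrix.toEuclideanLin M).toContinuousLinearMap‖

section Aux

variable {n : ℕ}

lemma norm_sq_eq_dot (x : Fin n → ℝ) :
    ‖(WithLp.equiv 2 (Fin n → ℝ)).symm x‖ ^ 2 = x ⬝ᵥ x := by
  rw [← real_inner_self_eq_norm_sq, WithLp.equiv_symm_apply, EuclideanSpace.inner_toLp_toLp]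
  simp [dotProduct]

lemma abs_dot_mulVec_le (H : Matrix (Fin n) (Fin n) ℝ) (x : Fin n → ℝ) :
    |x ⬝ᵥ H.mulVec x| ≤ opNorm H * (x ⬝ᵥ x) := by
  set f := (Matrix.toEuclideanLin H).toContinuousLinearMap with hf
  set x' := (WithLp.equiv 2 (Fin n → ℝ)).symm x with hx'
  have hfn : ‖f‖ = opNorm H := rfl
  have h1 : x ⬝ᵥ H.mulVec x = @inner ℝ (EuclideanSpace ℝ (Fin n)) _ x' (f x') := by
    rw [dotProduct_comm]; rfl
  rw [h1]
  calc |@inner ℝ (EuclideanSpace ℝ (Fin n)) _ x' (f x')| ≤ ‖x'‖ * ‖f x'‖ :=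
        abs_real_inner_le_norm _ _
    _ ≤ ‖x'‖ * (‖f‖ * ‖x'‖) := by gcongr; exact f.le_opNorm x'
    _ = opNorm H * (x ⬝ᵥ x) := by rw [← norm_sq_eq_dot x, ← hx', hfn]; ring

lemma eq_zero_of_opNorm_eq_zero (H : Matrix (Fin n) (Fin n) ℝ) (h : opNorm H = 0) : H = 0 := by
  have h1 : (Matrix.toEuclideanLin H).toContinuousLinearMap = 0 := by
    rwa [← norm_eq_zero]
  have h2 : Matrix.toEuclideanLin H = (0 : Matrix (Fin n) (Fin n) ℝ).toEuclideanLin := by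
    ext x i
    have h3 : (Matrix.toEuclideanLin H) x = 0 := by
      simpa using congrFun (congrArg (fun f => (DFunLike.coe f : EuclideanSpace ℝ (Fin n) → EuclideanSpace ℝ (Fin n))) h1) x
    simpa using congrArg (fun z => z i) h3
  exact Matrix.toEuclideanLin.injective h2

lemma dot_sq_le (x y : Fin n → ℝ) : (x ⬝ᵥ y)^2 ≤ (x ⬝ᵥ x) * (y ⬝ᵥ y) := by
  have h := @real_inner_mul_inner_self_le (EuclideanSpace ℝ (Fin n)) _ _
    ((WithLp.equiv 2 _).symm x) ((WithLp.equiv 2 _).symm y)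
  have e : ∀ a b : Fin n → ℝ, @inner ℝ (EuclideanSpace ℝ (Fin n)) _
      ((WithLp.equiv 2 _).symm a) ((WithLp.equiv 2 _).symm b) = a ⬝ᵥ b := by
    intro a b
    rw [WithLp.equiv_symm_apply, EuclideanSpace.inner_toLp_toLp]; simp [dotProduct, mul_comm]
  rw [e, e, e] at h
  nlinarith [h]

lemma eigDesc_congr {M N : Matrix (Fin n) (Fin n) ℝ} (e : M = N) (hM : M.IsHermitian)
    (hN : N.IsHermitian) : eigDesc hM = eigDesc hN := by subst e; rfl

lemma opNorm_nonneg (H : Matrix (Fin n) (Fin n) ℝ) : 0 ≤ opNorm H := norm_nonneg _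



lemma dot_eq_inner (x y : Fin n → ℝ) :
    x ⬝ᵥ y = @inner ℝ (EuclideanSpace ℝ (Fin n)) _ ((WithLp.equiv 2 _).symm x) ((WithLp.equiv 2 _).symm y) := by
  rw [WithLp.equiv_symm_apply, EuclideanSpace.inner_toLp_toLp]
  simp [dotProduct, mul_comm]

lemma dot_mulVec_symm (A : Matrix (Fin n) (Fin n) ℝ) (hA : A.IsHermitian) (x y : Fin n → ℝ) :
    x ⬝ᵥ A.mulVec y = A.mulVec x ⬝ᵥ y := by
  have ht : Aᵀ = A := by
    rw [← Matrix.conjTranspose_eq_transpose_of_trivial]; exact hA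
  rw [Matrix.dotProduct_mulVec, ← Matrix.mulVec_transpose, ht]

lemma parseval_dot (A : Matrix (Fin n) (Fin n) ℝ) (hA : A.IsHermitian) (x y : Fin n → ℝ) :
    x ⬝ᵥ y = ∑ i, ((hA.eigenvectorBasis i : Fin n → ℝ) ⬝ᵥ x) * ((hA.eigenvectorBasis i : Fin n → ℝ) ⬝ᵥ y) := by
  have h := hA.eigenvectorBasis.sum_inner_mul_inner ((WithLp.equiv 2 _).symm x) ((WithLp.equiv 2 _).symm y)
  rw [dot_eq_inner, ← h]
  apply Finset.sum_congr rfl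
  intro i _
  have e1 : ((hA.eigenvectorBasis i : Fin n → ℝ) ⬝ᵥ x)
      = @inner ℝ (EuclideanSpace ℝ (Fin n)) _ (hA.eigenvectorBasis i) ((WithLp.equiv 2 _).symm x) :=
    dot_eq_inner _ x
  have e2 : ((hA.eigenvectorBasis i : Fin n → ℝ) ⬝ᵥ y)
      = @inner ℝ (EuclideanSpace ℝ (Fin n)) _ (hA.eigenvectorBasis i) ((WithLp.equiv 2 _).symm y) :=
    dot_eq_inner _ y
  rw [e1, e2, real_inner_comm _ (hA.eigenvectorBasis i), real_inner_comm ((WithLp.equiv 2 _).symm x) (hA.eigenvectorBasis i)]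

lemma quad_expand (A : Matrix (Fin n) (Fin n) ℝ) (hA : A.IsHermitian) (x y : Fin n → ℝ) :
    x ⬝ᵥ A.mulVec y = ∑ i, hA.eigenvalues i * (((hA.eigenvectorBasis i : Fin n → ℝ) ⬝ᵥ x) * ((hA.eigenvectorBasis i : Fin n → ℝ) ⬝ᵥ y)) := by
  rw [parseval_dot A hA]
  apply Finset.sum_congr rfl
  intro i _
  have h1 : (hA.eigenvectorBasis i : Fin n → ℝ) ⬝ᵥ A.mulVec y = A.mulVec (hA.eigenvectorBasis i) ⬝ᵥ y :=
    dot_mulVec_symm A hA _ y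
  have e3 : A.mulVec (hA.eigenvectorBasis i : Fin n → ℝ) = hA.eigenvalues i • (hA.eigenvectorBasis i : Fin n → ℝ) :=
    hA.mulVec_eigenvectorBasis i
  rw [h1, e3, smul_dotProduct]
  simp [smul_eq_mul]; ring

lemma eigDesc_eq {M : Matrix (Fin n) (Fin n) ℝ} (hM : M.IsHermitian) (i : Fin n) :
    eigDesc hM i = hM.eigenvalues (Tuple.sort (fun j => -hM.eigenvalues j) i) := by
  simp [eigDesc]

lemma eigDesc_antitone {M : Matrix (Fin n) (Fin n) ℝ} (hM : M.IsHermitian) : Antitone (eigDesc hM) := by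
  intro i j hij
  have h := Tuple.monotone_sort (fun j => -hM.eigenvalues j) hij
  simp only [eigDesc]
  exact neg_le_neg h

lemma eigenvalues_le_eigDesc_zero {M : Matrix (Fin n) (Fin n) ℝ} (hM : M.IsHermitian) (h0 : 0 < n) (i : Fin n) :
    hM.eigenvalues i ≤ eigDesc hM ⟨0, h0⟩ := by
  set σ := Tuple.sort (fun j => -hM.eigenvalues j)
  have e : hM.eigenvalues i = eigDesc hM (σ.symm i) := by rw [eigDesc_eq]; exact congrArg _ (σ.apply_symm_apply i).symm
  rw [e]
  exact eigDesc_antitone hM (by simp [Fin.le_def])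

lemma eigenvalues_le_eigDesc_one {M : Matrix (Fin n) (Fin n) ℝ} (hM : M.IsHermitian) (h1 : 1 < n) (i : Fin n)
    (hi : i ≠ Tuple.sort (fun j => -hM.eigenvalues j) ⟨0, by omega⟩) :
    hM.eigenvalues i ≤ eigDesc hM ⟨1, h1⟩ := by
  set σ := Tuple.sort (fun j => -hM.eigenvalues j) with hσ
  have e : hM.eigenvalues i = eigDesc hM (σ.symm i) := by rw [eigDesc_eq]; exact congrArg _ (σ.apply_symm_apply i).symm
  rw [e]
  apply eigDesc_antitone hM
  have hne : σ.symm i ≠ (⟨0, by omega⟩ : Fin n) := fun h => hi (by rw [← h]; simp)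
  have hne' : ((σ.symm i : Fin n) : ℕ) ≠ 0 := by simpa [Fin.ext_iff] using hne
  simp only [Fin.le_def, Fin.val_mk]
  omega

/-- Rayleigh quotient bound. -/
lemma rayleigh_le (A : Matrix (Fin n) (Fin n) ℝ) (hA : A.IsHermitian) (h0 : 0 < n) (x : Fin n → ℝ) :
    x ⬝ᵥ A.mulVec x ≤ eigDesc hA ⟨0, h0⟩ * (x ⬝ᵥ x) := by
  rw [quad_expand A hA, parseval_dot A hA x x, Finset.mul_sum]
  apply Finset.sum_le_sum
  intro i _
  have h1 : hA.eigenvalues i ≤ eigDesc hA ⟨0, h0⟩ := eigenvalues_le_eigDesc_zero hA h0 i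
  have h2 : 0 ≤ ((hA.eigenvectorBasis i : Fin n → ℝ) ⬝ᵥ x) * ((hA.eigenvectorBasis i : Fin n → ℝ) ⬝ᵥ x) :=
    mul_self_nonneg _
  exact mul_le_mul_of_nonneg_right h1 h2

/-- Existence of a unit top eigenvector. -/
lemma exists_top_eigenvector (A : Matrix (Fin n) (Fin n) ℝ) (hA : A.IsHermitian) (h0 : 0 < n) :
    ∃ u : Fin n → ℝ, u ⬝ᵥ u = 1 ∧ A.mulVec u = eigDesc hA ⟨0, h0⟩ • u := by
  set j0 := Tuple.sort (fun j => -hA.eigenvalues j) ⟨0, h0⟩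
  refine ⟨(hA.eigenvectorBasis j0 : Fin n → ℝ), ?_, ?_⟩
  · rw [dot_eq_inner]
    have := hA.eigenvectorBasis.orthonormal.1 j0
    have h2 : @inner ℝ (EuclideanSpace ℝ (Fin n)) _ (hA.eigenvectorBasis j0) (hA.eigenvectorBasis j0) = 1 := by
      rw [real_inner_self_eq_norm_sq, this]; norm_num
    exact h2
  · have e3 : A.mulVec (hA.eigenvectorBasis j0 : Fin n → ℝ) = hA.eigenvalues j0 • (hA.eigenvectorBasis j0 : Fin n → ℝ) :=
      hA.mulVec_eigenvectorBasis j0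
    rw [e3, eigDesc_eq]

/-- Second eigenvalue Rayleigh bound on the orthogonal complement of a top eigenvector. -/
lemma second_rayleigh (M : Matrix (Fin n) (Fin n) ℝ) (hM : M.IsHermitian) (h1 : 1 < n)
    (v : Fin n → ℝ) (hv : v ⬝ᵥ v = 1)
    (hveig : M.mulVec v = eigDesc hM ⟨0, by omega⟩ • v)
    (hlt : eigDesc hM ⟨1, h1⟩ < eigDesc hM ⟨0, by omega⟩)
    (w : Fin n → ℝ) (hw : v ⬝ᵥ w = 0) :
    w ⬝ᵥ M.mulVec w ≤ eigDesc hM ⟨1, h1⟩ * (w ⬝ᵥ w) := by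
  set σ := Tuple.sort (fun j => -hM.eigenvalues j) with hσ
  set j0 := σ (⟨0, by omega⟩ : Fin n) with hj0
  set B := fun i => (hM.eigenvectorBasis i : Fin n → ℝ) with hB
  -- coefficients of v
  have hd : ∀ i : Fin n, i ≠ j0 → B i ⬝ᵥ v = 0 := by
    intro i hi
    have e1 : B i ⬝ᵥ M.mulVec v = hM.eigenvalues i * (B i ⬝ᵥ v) := by
      rw [dot_mulVec_symm M hM]
      have e3 : M.mulVec (B i) = hM.eigenvalues i • B i := hM.mulVec_eigenvectorBasis i
      rw [e3, smul_dotProduct]; simp [smul_eq_mul]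
    have e2 : B i ⬝ᵥ M.mulVec v = eigDesc hM ⟨0, by omega⟩ * (B i ⬝ᵥ v) := by
      rw [hveig, dotProduct_smul]; simp [smul_eq_mul]
    have hlt2 : hM.eigenvalues i < eigDesc hM ⟨0, by omega⟩ :=
      lt_of_le_of_lt (eigenvalues_le_eigDesc_one hM h1 i hi) hlt
    have : (eigDesc hM ⟨0, by omega⟩ - hM.eigenvalues i) * (B i ⬝ᵥ v) = 0 := by
      rw [sub_mul, ← e1, ← e2]; ring
    rcases mul_eq_zero.mp this with h | h
    · exfalso; linarith
    · exact h
  -- coefficient of w along j0 vanishes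
  have hc0 : B j0 ⬝ᵥ w = 0 := by
    have hp := parseval_dot M hM v w
    rw [hw] at hp
    have hps : ∑ i, (B i ⬝ᵥ v) * (B i ⬝ᵥ w) = (B j0 ⬝ᵥ v) * (B j0 ⬝ᵥ w) := by
      apply Finset.sum_eq_single
      · intro i _ hi
        rw [hd i hi]; ring
      · intro h; exact absurd (Finset.mem_univ _) h
    have hd0 : (B j0 ⬝ᵥ v) ≠ 0 := by
      intro h0
      have hp2 := parseval_dot M hM v v
      rw [hv] at hp2
      have : ∑ i, (B i ⬝ᵥ v) * (B i ⬝ᵥ v) = 0 := by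
        apply Finset.sum_eq_zero
        intro i _
        by_cases hi : i = j0
        · rw [hi, h0]; ring
        · rw [hd i hi]; ring
      rw [this] at hp2; norm_num at hp2
    have : (B j0 ⬝ᵥ v) * (B j0 ⬝ᵥ w) = 0 := by rw [← hps, ← hp]
    exact (mul_eq_zero.mp this).resolve_left hd0
  -- main bound
  rw [quad_expand M hM, parseval_dot M hM w w, Finset.mul_sum]
  apply Finset.sum_le_sum
  intro i _
  by_cases hi : i = j0
  · subst hi
    rw [hc0]
    simp
  · have h2 : hM.eigenvalues i ≤ eigDesc hM ⟨1, h1⟩ := eigenvalues_le_eigDesc_one hM h1 i hi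
    exact mul_le_mul_of_nonneg_right h2 (mul_self_nonneg _)



lemma endgame (l1 l2 hn s b2 r α t2 μ : ℝ)
    (hδpos : 0 < l1 - l2) (hgap : 2 * hn ≤ l1 - l2)
    (hs_lb : -hn ≤ s) (hb2nn : 0 ≤ b2) (ht2nn : 0 ≤ t2)
    (ha2 : α ^ 2 + t2 = 1)
    (I4 : μ * α = l1 * α + s * α + r)
    (I5 : μ * t2 ≤ l2 * t2 + α * r + hn * t2)
    (I6 : r ^ 2 ≤ t2 * (b2 - s ^ 2)) :
    μ ≤ l1 + s + 2 * b2 / (l1 - l2) := by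
  have hBnn : 0 ≤ 2 * b2 / (l1 - l2) := by positivity
  by_cases hα0 : α = 0
  · have ht21 : t2 = 1 := by rw [← ha2, hα0]; ring
    rw [hα0, ht21] at I5
    simp only [mul_one, mul_zero, zero_mul] at I5
    linarith
  · have hρeq : r = (r / α) * α := (div_mul_cancel₀ r hα0).symm
    set ρ := r / α with hρ'
    have hμeq : μ = l1 + s + ρ := by
      have h6 : (μ - (l1 + s + ρ)) * α = 0 := by
        rw [sub_mul, I4]; rw [hρeq]; ring
      rcases mul_eq_zero.mp h6 with h7 | h7
      · linarith [sub_eq_zero.mp h7]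
      · exact absurd h7 hα0
    suffices hfin : ρ ≤ 2 * b2 / (l1 - l2) by linarith
    by_contra hcon
    push_neg at hcon
    have hρpos : 0 < ρ := lt_of_le_of_lt hBnn hcon
    have hcnn : 0 ≤ l1 - l2 + s - hn := by linarith
    have har : α * r = ρ * α ^ 2 := by rw [hρeq]; ring
    have K1 : t2 * (l1 - l2 + s - hn + ρ) ≤ ρ * α ^ 2 := by nlinarith [I5, har]
    have K2 : ρ ^ 2 * α ^ 2 ≤ t2 * (b2 - s ^ 2) := by
      have h8 : r ^ 2 = ρ ^ 2 * α ^ 2 := by rw [hρeq]; ring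
      linarith [I6, h8.symm.le]
    have hcon' : 2 * b2 < ρ * (l1 - l2) := by
      rw [div_lt_iff₀ hδpos] at hcon; exact hcon
    rcases eq_or_lt_of_le ht2nn with ht20 | ht2pos
    · have h9 : ρ ^ 2 * α ^ 2 ≤ 0 := by rw [← ht20] at K2; linarith
      have hα2pos : 0 < α ^ 2 := by positivity
      nlinarith [h9, hα2pos, hρpos]
    · have key1 : ρ * (l1 - l2 + s - hn + ρ) ≤ b2 - s ^ 2 := by
        nlinarith [mul_le_mul_of_nonneg_left K1 hρpos.le, K2, ht2pos]
      have h2hn : 0 ≤ (l1 - l2) - 2 * hn := by linarith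
      have key2 : (b2 - s ^ 2) * (l1 - l2) ^ 2
          ≤ 2 * b2 * (l1 - l2) * (l1 - l2 + s - hn) + 4 * b2 ^ 2 := by
        have j1 := sq_nonneg ((l1 - l2) * s + b2)
        have j2 := mul_nonneg (mul_nonneg hb2nn hδpos.le) h2hn
        have j3 := sq_nonneg b2
        have j4 : 2 * b2 * (l1 - l2) * (l1 - l2 + s - hn) + 4 * b2 ^ 2
            - (b2 - s ^ 2) * (l1 - l2) ^ 2
            = b2 * (l1 - l2) * ((l1 - l2) - 2 * hn) + 3 * b2 ^ 2
              + ((l1 - l2) * s + b2) ^ 2 := by ring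
        linarith
      nlinarith [key1, key2, hcon',
        mul_nonneg (mul_nonneg (sub_nonneg.mpr hcon'.le) hδpos.le) hcnn,
        mul_pos (sub_pos.mpr hcon') (by positivity : (0:ℝ) < ρ * (l1 - l2) + 2 * b2)]

end Aux

/-- Eigenvalue perturbation bound for the top eigenvalue (specialized form):
if `λ₁(M) − λ₂(M) ≥ 2‖H‖_op` and `v` is a unit top eigenvector of `M`, then
`λ₁(M+H) ≤ λ₁(M) + vᵀHv + 2‖Hv‖₂²/(λ₁(M) − λ₂(M))`. -/
theorem top_eigenvalue_perturbation_bound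
    {n : ℕ} (hn : 2 ≤ n)
    (M H : Matrix (Fin n) (Fin n) ℝ)
    (hM : M.IsHermitian) (hH : H.IsHermitian)
    (v : Fin n → ℝ) (hv : v ⬝ᵥ v = 1)
    (hveig : M.mulVec v = eigDesc hM ⟨0, by omega⟩ • v)
    (hgap : 2 * opNorm H ≤ eigDesc hM ⟨0, by omega⟩ - eigDesc hM ⟨1, by omega⟩) :
    eigDesc (hM.add hH) ⟨0, by omega⟩ ≤
      eigDesc hM ⟨0, by omega⟩ + v ⬝ᵥ H.mulVec v +
        2 * (H.mulVec v ⬝ᵥ H.mulVec v) /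
          (eigDesc hM ⟨0, by omega⟩ - eigDesc hM ⟨1, by omega⟩) := by
  have h0 : 0 < n := by omega
  have h1 : 1 < n := by omega
  set l1 := eigDesc hM ⟨0, by omega⟩ with hl1
  set l2 := eigDesc hM ⟨1, by omega⟩ with hl2
  set hnorm := opNorm H with hhn
  have hnn : 0 ≤ hnorm := opNorm_nonneg H
  have hδnn : 0 ≤ l1 - l2 := by linarith
  rcases eq_or_lt_of_le hδnn with hδ0 | hδpos
  · -- gap is zero: H = 0
    have hH0 : H = 0 := by
      apply eq_zero_of_opNorm_eq_zero
      nlinarith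
    subst hH0
    have e : M + (0 : Matrix (Fin n) (Fin n) ℝ) = M := add_zero M
    have := eigDesc_congr e (hM.add hH) hM
    rw [this]
    simp [← hl1]
  · -- main case
    set A := M + H with hA'
    have hA : A.IsHermitian := hM.add hH
    set μ := eigDesc (hM.add hH) ⟨0, h0⟩ with hμ'
    obtain ⟨u, hu1, huA⟩ := exists_top_eigenvector A (hM.add hH) h0
    set α := v ⬝ᵥ u with hα'
    set w : Fin n → ℝ := u - α • v with hw'
    set s := v ⬝ᵥ H.mulVec v with hs'
    set b2 := H.mulVec v ⬝ᵥ H.mulVec v with hb2'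
    set r := w ⬝ᵥ H.mulVec v with hr'
    set t2 := w ⬝ᵥ w with ht2'
    -- basic dot algebra
    have hdnn : ∀ x : Fin n → ℝ, 0 ≤ x ⬝ᵥ x :=
      fun x => Finset.sum_nonneg (fun i _ => mul_self_nonneg (x i))
    have hu : u = α • v + w := by rw [hw']; module
    have hwv : w ⬝ᵥ v = 0 := by
      rw [hw', sub_dotProduct, smul_dotProduct, hv,
        dotProduct_comm u v, ← hα']; simp
    have hvw : v ⬝ᵥ w = 0 := by rw [dotProduct_comm]; exact hwv
    have h3 : w ⬝ᵥ u = 1 - α^2 := by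
      rw [hw', sub_dotProduct, smul_dotProduct, hu1, ← hα']
      simp [smul_eq_mul]; ring
    have ha2 : α^2 + t2 = 1 := by
      have h4 : t2 = w ⬝ᵥ u - α * (w ⬝ᵥ v) := by
        rw [ht2']; nth_rewrite 2 [hw']
        rw [dotProduct_sub, dotProduct_smul]; simp [smul_eq_mul]
      rw [h4, h3, hwv]; ring
    have ht2nn : 0 ≤ t2 := hdnn w
    have hb2nn : 0 ≤ b2 := hdnn _
    have hs_abs : |s| ≤ hnorm := by
      have := abs_dot_mulVec_le H v
      rw [hv, ← hs'] at this; simpa using this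
    have hs_lb : -hnorm ≤ s := (abs_le.mp hs_abs).1
    have hwHw : w ⬝ᵥ H.mulVec w ≤ hnorm * t2 := by
      have h5 := abs_dot_mulVec_le H w
      rw [← ht2'] at h5
      exact le_trans (le_abs_self _) h5
    have hvMv : v ⬝ᵥ M.mulVec v = l1 := by
      rw [hveig, dotProduct_smul, hv]; simp
    have hvAv : v ⬝ᵥ A.mulVec v = l1 + s := by
      rw [hA', Matrix.add_mulVec, dotProduct_add, hvMv, ← hs']
    have hlow : l1 + s ≤ μ := by
      have h5 := rayleigh_le A (hM.add hH) h0 v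
      rw [hvAv, hv, mul_one] at h5
      exact h5
    -- identity I4 : μ * α = l1 * α + s * α + r
    have e1 : v ⬝ᵥ A.mulVec u = μ * α := by
      rw [huA, dotProduct_smul, ← hα']; exact rfl
    have e2v : v ⬝ᵥ M.mulVec u = l1 * α := by
      rw [dot_mulVec_symm M hM, hveig, smul_dotProduct, ← hα']; simp [smul_eq_mul]
    have e2h : v ⬝ᵥ H.mulVec u = s * α + r := by
      rw [dot_mulVec_symm H hH v u, hu, dotProduct_add, dotProduct_smul,
        dotProduct_comm (H.mulVec v) v, ← hs', dotProduct_comm (H.mulVec v) w, ← hr']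
      simp [smul_eq_mul]; ring
    have I4 : μ * α = l1 * α + s * α + r := by
      rw [← e1, hA', Matrix.add_mulVec, dotProduct_add, e2v, e2h]; ring
    -- inequality I5 : μ * t2 ≤ l2 * t2 + α * r + hnorm * t2
    have hwu : w ⬝ᵥ u = t2 := by rw [h3]; linarith
    have e3 : w ⬝ᵥ A.mulVec u = μ * t2 := by
      rw [huA, dotProduct_smul, hwu]; exact rfl
    have hlt : l2 < l1 := by linarith
    have hwMw : w ⬝ᵥ M.mulVec w ≤ l2 * t2 := by
      have := second_rayleigh M hM h1 v hv hveig hlt w hvw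
      rw [← ht2'] at this; exact this
    have e4m : w ⬝ᵥ M.mulVec u ≤ l2 * t2 := by
      rw [hu, Matrix.mulVec_add, Matrix.mulVec_smul, hveig, dotProduct_add,
        dotProduct_smul, dotProduct_smul, hwv]
      simpa using hwMw
    have e4h : w ⬝ᵥ H.mulVec u ≤ α * r + hnorm * t2 := by
      rw [hu, Matrix.mulVec_add, Matrix.mulVec_smul, dotProduct_add,
        dotProduct_smul, ← hr']
      have : α • r + w ⬝ᵥ H.mulVec w ≤ α * r + hnorm * t2 := by
        simp only [smul_eq_mul]; linarith [hwHw]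
      simpa [smul_eq_mul] using this
    have I5 : μ * t2 ≤ l2 * t2 + α * r + hnorm * t2 := by
      rw [← e3, hA', Matrix.add_mulVec, dotProduct_add]
      linarith [e4m, e4h]
    -- Cauchy-Schwarz I6 : r^2 ≤ t2 * (b2 - s^2)
    have hgg : (H.mulVec v - s • v) ⬝ᵥ (H.mulVec v - s • v) = b2 - s^2 := by
      rw [dotProduct_sub, sub_dotProduct, sub_dotProduct,
        smul_dotProduct, smul_dotProduct, dotProduct_smul,
        dotProduct_smul, ← hb2', dotProduct_comm (H.mulVec v) v, ← hs', hv]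
      simp [smul_eq_mul]; ring
    have hwg : w ⬝ᵥ (H.mulVec v - s • v) = r := by
      rw [dotProduct_sub, dotProduct_smul, ← hr', hwv]
      simp
    have I6 : r^2 ≤ t2 * (b2 - s^2) := by
      have := dot_sq_le w (H.mulVec v - s • v)
      rw [hwg, hgg, ← ht2'] at this; exact this
    exact endgame l1 l2 hnorm s b2 r α t2 μ hδpos hgap hs_lb hb2nn ht2nn ha2 I4 I5 I6
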